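/- Every Rota-Baxter word 𝔵 ∈ 𝔛_∞ has a unique standard decomposition 𝔵 = 𝔵₁𝔵₂⋯𝔵_b (concatenation) where each factor 𝔵_i lies alternately in X or in ⌊𝔛_∞⌋ (i.e., consecutive factors are of different types). -/

import Mathlib

/-! Rota-Baxter words over an alphabet `X`, with two bracket symbols. The
alphabet is `X ⊕ Bool`, where `Sum.inr false` is the opening bracket `⌊` and
`Sum.inr true` is the closing bracket `⌋`. Words are lists; sets of words are
combined by concatenation. -/

/-- The opening bracket `⌊`. -/
def lb {X : Type*} : X ⊕ Bool := Sum.inr false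

/-- The closing bracket `⌋`. -/
def rb {X : Type*} : X ⊕ Bool := Sum.inr true

/-- The one-letter word given by `x ∈ X`. -/
def letter {X : Type*} (x : X) : List (X ⊕ Bool) := [Sum.inl x]

/-- The bracketed word `⌊w⌋`. -/
def bracket {X : Type*} (w : List (X ⊕ Bool)) : List (X ⊕ Bool) := lb :: (w ++ [rb])

/-- Concatenation of two sets of words. -/
def catS {X : Type*} (Y Z : Set (List (X ⊕ Bool))) : Set (List (X ⊕ Bool)) :=
  {w | ∃ y ∈ Y, ∃ z ∈ Z, w = y ++ z}

/-- The set `⌊Z⌋`. -/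
def brS {X : Type*} (Z : Set (List (X ⊕ Bool))) : Set (List (X ⊕ Bool)) := bracket '' Z

/-- `powS Y n` is the `(n+1)`-fold concatenation power `Y^{n+1}`. -/
def powS {X : Type*} (Y : Set (List (X ⊕ Bool))) : ℕ → Set (List (X ⊕ Bool))
  | 0 => Y
  | n + 1 => catS Y (powS Y n)

/-- The set of one-letter words, identified with `X`. -/
def lettersS (X : Type*) : Set (List (X ⊕ Bool)) := Set.range letter

/-- The alternating product `Λ(Y, Z)`:
`(⋃_{r≥1} (Y⌊Z⌋)^r) ∪ (⋃_{r≥0} (Y⌊Z⌋)^r Y) ∪ (⋃_{r≥1} (⌊Z⌋Y)^r) ∪ (⋃_{r≥0} (⌊Z⌋Y)^r ⌊Z⌋)`. -/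
def altS {X : Type*} (Y Z : Set (List (X ⊕ Bool))) : Set (List (X ⊕ Bool)) :=
  (⋃ n, powS (catS Y (brS Z)) n) ∪ (Y ∪ ⋃ n, catS (powS (catS Y (brS Z)) n) Y) ∪
  (⋃ n, powS (catS (brS Z) Y) n) ∪ (brS Z ∪ ⋃ n, catS (powS (catS (brS Z) Y) n) (brS Z))

/-- `𝔛₀ = X`, `𝔛_{n+1} = Λ(X, 𝔛_n)`. -/
def frakX (X : Type*) : ℕ → Set (List (X ⊕ Bool))
  | 0 => lettersS X
  | n + 1 => altS (lettersS X) (frakX X n)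

/-- `𝔛_∞ = ⋃_n 𝔛_n`, the set of Rota-Baxter words over `X`. -/
def frakXinf (X : Type*) : Set (List (X ⊕ Bool)) := ⋃ n, frakX X n

/-- A list of factors is a standard decomposition candidate: it is nonempty,
each factor is either a letter from `X` or a bracketed Rota-Baxter word
`⌊w⌋` with `w ∈ 𝔛_∞`, and consecutive factors are of different types
(letters and bracketed words alternate). -/
def IsStd {X : Type*} (L : List (List (X ⊕ Bool))) : Prop :=
  L ≠ [] ∧
  (∀ f ∈ L, (∃ x : X, f = letter x) ∨ f ∈ brS (frakXinf X)) ∧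
  L.Chain' (fun f g => (∃ x : X, f = letter x) ↔ ¬ ∃ x : X, g = letter x)

namespace RB

variable {X : Type*}

/-- Count of closing brackets. -/
def cntT (w : List (X ⊕ Bool)) : ℕ := w.countP (fun a => a matches Sum.inr true)

/-- Count of opening brackets. -/
def cntF (w : List (X ⊕ Bool)) : ℕ := w.countP (fun a => a matches Sum.inr false)

/-- Balanced word: every prefix has at least as many `⌊` as `⌋`, equality at the end. -/
def Bal (w : List (X ⊕ Bool)) : Prop :=
  (∀ p, p <+: w → cntT p ≤ cntF p) ∧ cntT w = cntF w

theorem cntT_append (y z : List (X ⊕ Bool)) : cntT (y ++ z) = cntT y + cntT z :=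
  List.countP_append

theorem cntF_append (y z : List (X ⊕ Bool)) : cntF (y ++ z) = cntF y + cntF z :=
  List.countP_append

theorem Bal.append {y z : List (X ⊕ Bool)} (hy : Bal y) (hz : Bal z) : Bal (y ++ z) := by
  constructor
  · intro p hp
    rcases le_or_gt p.length y.length with hl | hl
    · exact hy.1 p (List.prefix_of_prefix_length_le hp (y.prefix_append z) hl)
    · have hyp : y <+: p :=
        List.prefix_of_prefix_length_le (y.prefix_append z) hp hl.le
      obtain ⟨q, rfl⟩ := hyp
      have hq : q <+: z := by
        obtain ⟨t, ht⟩ := hp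
        rw [List.append_assoc] at ht
        exact ⟨t, List.append_cancel_left ht⟩
      rw [cntT_append, cntF_append, hy.2]
      exact Nat.add_le_add_left (hz.1 q hq) _
  · rw [cntT_append, cntF_append, hy.2, hz.2]

theorem bal_letter (x : X) : Bal (letter x) := by
  constructor
  · intro p hp
    rcases (List.prefix_cons_iff.mp hp) with rfl | ⟨q, rfl, hq⟩
    · exact le_refl _
    · rcases List.prefix_nil.mp hq with rfl
      simp [cntT, cntF, letter, List.countP_cons]
  · simp [cntT, cntF, letter, List.countP_cons]

theorem bal_bracket {w : List (X ⊕ Bool)} (hw : Bal w) : Bal (bracket w) := by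
  have hT : cntT (bracket w) = cntT w + 1 := by
    simp [bracket, cntT, lb, rb, List.countP_cons, List.countP_append]
  have hF : cntF (bracket w) = cntF w + 1 := by
    simp [bracket, cntF, lb, rb, List.countP_cons, List.countP_append]
  constructor
  · intro p hp
    rcases (List.prefix_cons_iff.mp hp) with rfl | ⟨q, rfl, hq⟩
    · simp [cntT, cntF]
    · have hTq : cntT (lb :: q) = cntT q := by simp [cntT, lb, List.countP_cons]
      have hFq : cntF (lb :: q) = cntF q + 1 := by simp [cntF, lb, List.countP_cons]
      rw [hTq, hFq]
      rcases le_or_gt q.length w.length with hl | hl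
      · have : q <+: w := List.prefix_of_prefix_length_le hq (w.prefix_append [rb]) hl
        exact le_trans (hw.1 q this) (Nat.le_succ_of_le (le_refl _))
      · have hwq : w <+: q :=
          List.prefix_of_prefix_length_le (w.prefix_append [rb]) hq hl.le
        obtain ⟨r, rfl⟩ := hwq
        have hr : r <+: [rb] := by
          obtain ⟨t, ht⟩ := hq
          rw [List.append_assoc] at ht
          exact ⟨t, List.append_cancel_left ht⟩
        have hrT : cntT r ≤ 1 := by
          rcases List.prefix_cons_iff.mp hr with rfl | ⟨s, rfl, hs⟩
          · simp [cntT]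
          · rcases List.prefix_nil.mp hs with rfl
            simp [cntT, rb, List.countP_cons]
        rw [cntT_append, cntF_append, hw.2]
        omega
  · rw [hT, hF, hw.2]

theorem bal_catS {Y Z : Set (List (X ⊕ Bool))} (hY : ∀ w ∈ Y, Bal w) (hZ : ∀ w ∈ Z, Bal w) :
    ∀ w ∈ catS Y Z, Bal w := by
  rintro w ⟨y, hy, z, hz, rfl⟩
  exact (hY y hy).append (hZ z hz)

theorem bal_brS {Z : Set (List (X ⊕ Bool))} (hZ : ∀ w ∈ Z, Bal w) :
    ∀ w ∈ brS Z, Bal w := by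
  rintro w ⟨z, hz, rfl⟩
  exact bal_bracket (hZ z hz)

theorem bal_powS {Y : Set (List (X ⊕ Bool))} (hY : ∀ w ∈ Y, Bal w) :
    ∀ n, ∀ w ∈ powS Y n, Bal w := by
  intro n
  induction n with
  | zero => exact hY
  | succ n ih => exact bal_catS hY ih

theorem bal_altS {Y Z : Set (List (X ⊕ Bool))} (hY : ∀ w ∈ Y, Bal w) (hZ : ∀ w ∈ Z, Bal w) :
    ∀ w ∈ altS Y Z, Bal w := by
  have hbr := bal_brS hZ
  intro w hw
  simp only [altS, Set.mem_union] at hw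
  rcases hw with (((h | h | h) | h) | h | h)
  · obtain ⟨n, h⟩ := Set.mem_iUnion.mp h
    exact bal_powS (bal_catS hY hbr) n w h
  · exact hY w h
  · obtain ⟨n, h⟩ := Set.mem_iUnion.mp h
    exact bal_catS (bal_powS (bal_catS hY hbr) n) hY w h
  · obtain ⟨n, h⟩ := Set.mem_iUnion.mp h
    exact bal_powS (bal_catS hbr hY) n w h
  · exact hbr w h
  · obtain ⟨n, h⟩ := Set.mem_iUnion.mp h
    exact bal_catS (bal_powS (bal_catS hbr hY) n) hbr w h

theorem bal_lettersS : ∀ w ∈ lettersS X, Bal w := by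
  rintro w ⟨x, rfl⟩; exact bal_letter x

theorem bal_frakX : ∀ n, ∀ w ∈ frakX X n, Bal w := by
  intro n
  induction n with
  | zero => exact bal_lettersS
  | succ n ih => exact bal_altS bal_lettersS ih

theorem bal_frakXinf : ∀ w ∈ frakXinf X, Bal w := by
  intro w hw
  obtain ⟨n, h⟩ := Set.mem_iUnion.mp hw
  exact bal_frakX n w h

/-- The bracket-matching lemma. -/
theorem bracket_match {w₁ w₂ s₁ s₂ : List (X ⊕ Bool)} (h₁ : Bal w₁) (h₂ : Bal w₂)
    (h : w₁ ++ rb :: s₁ = w₂ ++ rb :: s₂) : w₁ = w₂ ∧ s₁ = s₂ := by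
  have key : ∀ w₁ w₂ s₁ s₂ : List (X ⊕ Bool), Bal w₁ → Bal w₂ →
      w₁ ++ rb :: s₁ = w₂ ++ rb :: s₂ → w₁.length < w₂.length → False := by
    intro w₁ w₂ s₁ s₂ ha hb heq hlt
    have hp1 : w₁ ++ [rb] <+: w₂ ++ rb :: s₂ := by
      refine ⟨s₁, ?_⟩
      rw [List.append_assoc]; exact heq
    have hp : w₁ ++ [rb] <+: w₂ :=
      List.prefix_of_prefix_length_le hp1 (w₂.prefix_append _) (by simp; omega)
    have hT1 : cntT [(rb : X ⊕ Bool)] = 1 := by simp [cntT, rb, List.countP_cons]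
    have hF1 : cntF [(rb : X ⊕ Bool)] = 0 := by simp [cntF, rb, List.countP_cons]
    have h5 := hb.1 _ hp
    rw [cntT_append, cntF_append, hT1, hF1] at h5
    have h6 := ha.2
    omega
  have hlen : w₁.length = w₂.length := by
    rcases lt_trichotomy w₁.length w₂.length with hl | hl | hl
    · exact absurd (key w₁ w₂ s₁ s₂ h₁ h₂ h hl) not_false
    · exact hl
    · exact absurd (key w₂ w₁ s₂ s₁ h₂ h₁ h.symm hl) not_false
  obtain ⟨h1, h2⟩ := List.append_inj h hlen
  exact ⟨h1, by injection h2⟩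

/-- Factor type: is a one-letter word over `X`. -/
def isLet (f : List (X ⊕ Bool)) : Prop := ∃ x : X, f = letter x

theorem not_isLet_bracket (w : List (X ⊕ Bool)) : ¬ isLet (bracket w) := by
  rintro ⟨x, hx⟩
  simp [bracket, letter, lb] at hx

/-- Standard-decomposition candidate without the nonemptiness condition. -/
def Good (L : List (List (X ⊕ Bool))) : Prop :=
  (∀ f ∈ L, isLet f ∨ f ∈ brS (frakXinf X)) ∧
  L.Chain' (fun f g => isLet f ↔ ¬ isLet g)

theorem Good.tail {f : List (X ⊕ Bool)} {L : List (List (X ⊕ Bool))}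
    (h : Good (f :: L)) : Good L :=
  ⟨fun g hg => h.1 g (List.mem_cons_of_mem f hg), h.2.tail⟩

/-- Uniqueness of standard decompositions. -/
theorem good_unique : ∀ L₁ L₂ : List (List (X ⊕ Bool)), Good L₁ → Good L₂ →
    L₁.flatten = L₂.flatten → L₁ = L₂ := by
  intro L₁
  induction L₁ with
  | nil =>
    intro L₂ _ h₂ hf
    cases L₂ with
    | nil => rfl
    | cons f t =>
      exfalso
      rcases h₂.1 f (List.mem_cons_self) with ⟨x, rfl⟩ | ⟨z, hz, rfl⟩
      · simp [letter] at hf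
      · simp [bracket] at hf
  | cons f₁ t₁ ih =>
    intro L₂ h₁ h₂ hf
    cases L₂ with
    | nil =>
      exfalso
      rcases h₁.1 f₁ (List.mem_cons_self) with ⟨x, rfl⟩ | ⟨z, hz, rfl⟩
      · simp [letter] at hf
      · simp [bracket] at hf
    | cons f₂ t₂ =>
      simp only [List.flatten_cons] at hf
      rcases h₁.1 f₁ (List.mem_cons_self) with ⟨x₁, rfl⟩ | ⟨z₁, hz₁, rfl⟩ <;>
        rcases h₂.1 f₂ (List.mem_cons_self) with ⟨x₂, rfl⟩ | ⟨z₂, hz₂, rfl⟩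
      · simp only [letter, List.cons_append, List.nil_append, List.cons.injEq,
          Sum.inl.injEq] at hf
        obtain ⟨rfl, hf⟩ := hf
        rw [ih t₂ h₁.tail h₂.tail hf]
      · exfalso
        simp [letter, bracket, lb] at hf
      · exfalso
        simp [letter, bracket, lb] at hf
      · simp only [bracket, List.cons_append, List.cons.injEq, true_and] at hf
        rw [List.append_assoc, List.append_assoc] at hf
        simp only [List.singleton_append] at hf
        obtain ⟨hw, hs⟩ := bracket_match (bal_frakXinf z₁ hz₁) (bal_frakXinf z₂ hz₂) hf
        subst hw
        rw [ih t₂ h₁.tail h₂.tail hs]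

/-! ### Existence -/

theorem brS_sub {Z : Set (List (X ⊕ Bool))} (hZ : Z ⊆ frakXinf X) {w : List (X ⊕ Bool)}
    (hw : w ∈ brS Z) : w ∈ brS (frakXinf X) := Set.image_mono hZ hw

/-- One-factor decompositions. -/
theorem std_single {f : List (X ⊕ Bool)} (h : isLet f ∨ f ∈ brS (frakXinf X)) :
    IsStd [f] := ⟨by simp, by simpa [isLet] using h, List.isChain_singleton f⟩

theorem std_append {L₁ L₂ : List (List (X ⊕ Bool))} (h₁ : IsStd L₁) (h₂ : IsStd L₂)
    (hb : ∀ f ∈ L₁.getLast?, ∀ g ∈ L₂.head?, (isLet f ↔ ¬ isLet g)) : IsStd (L₁ ++ L₂) := by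
  refine ⟨by simp [h₁.1], ?_, h₁.2.2.append h₂.2.2 hb⟩
  intro f hf
  rcases List.mem_append.mp hf with hf | hf
  · exact h₁.2.1 f hf
  · exact h₂.2.1 f hf

/-- A decomposition datum: head type `s`, last type `t` (`true` = letter). -/
def Dec (s t : Bool) (w : List (X ⊕ Bool)) : Prop :=
  ∃ L : List (List (X ⊕ Bool)), w = L.flatten ∧ IsStd L ∧
    (∀ f ∈ L.head?, isLet f ↔ s = true) ∧ (∀ f ∈ L.getLast?, isLet f ↔ t = true)

theorem dec_letter {w : List (X ⊕ Bool)} (hw : w ∈ lettersS X) : Dec true true w := by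
  obtain ⟨x, rfl⟩ := hw
  refine ⟨[letter x], by simp, std_single (Or.inl ⟨x, rfl⟩), ?_, ?_⟩
  · simp only [List.head?_cons, Option.mem_def, Option.some.injEq]
    rintro f rfl
    exact iff_of_true ⟨x, rfl⟩ (by simp)
  · simp only [List.getLast?_singleton, Option.mem_def, Option.some.injEq]
    rintro f rfl
    exact iff_of_true ⟨x, rfl⟩ (by simp)

theorem dec_br {Z : Set (List (X ⊕ Bool))} (hZ : Z ⊆ frakXinf X) {w : List (X ⊕ Bool)}
    (hw : w ∈ brS Z) : Dec false false w := by
  obtain ⟨z, hz, rfl⟩ := hw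
  refine ⟨[bracket z], by simp, std_single (Or.inr ⟨z, hZ hz, rfl⟩), ?_, ?_⟩
  · simp only [List.head?_cons, Option.mem_def, Option.some.injEq]
    rintro f rfl
    simp [not_isLet_bracket]
  · simp only [List.getLast?_singleton, Option.mem_def, Option.some.injEq]
    rintro f rfl
    simp [not_isLet_bracket]

theorem Dec.append {s t u v : Bool} {y z : List (X ⊕ Bool)} (hy : Dec s t y) (hz : Dec u v z)
    (htu : t ≠ u) : Dec s v (y ++ z) := by
  obtain ⟨L₁, rfl, hs₁, hh₁, hl₁⟩ := hy
  obtain ⟨L₂, rfl, hs₂, hh₂, hl₂⟩ := hz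
  refine ⟨L₁ ++ L₂, List.flatten_append.symm, ?_, ?_, ?_⟩
  · refine std_append hs₁ hs₂ ?_
    intro f hf g hg
    have h1 := hl₁ f hf
    have h2 := hh₂ g hg
    cases t <;> cases u <;> simp_all
  · rw [List.head?_append_of_ne_nil _ hs₁.1]
    exact hh₁
  · rw [List.getLast?_append_of_ne_nil _ hs₂.1]
    exact hl₂

theorem dec_cat_lb {Z : Set (List (X ⊕ Bool))} (hZ : Z ⊆ frakXinf X) :
    ∀ w ∈ catS (lettersS X) (brS Z), Dec true false w := by
  rintro w ⟨y, hy, z, hz, rfl⟩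
  exact (dec_letter hy).append (dec_br hZ hz) (by simp)

theorem dec_cat_bl {Z : Set (List (X ⊕ Bool))} (hZ : Z ⊆ frakXinf X) :
    ∀ w ∈ catS (brS Z) (lettersS X), Dec false true w := by
  rintro w ⟨y, hy, z, hz, rfl⟩
  exact (dec_br hZ hy).append (dec_letter hz) (by simp)

theorem dec_pow {s t : Bool} {Y : Set (List (X ⊕ Bool))} (hst : s ≠ t)
    (hY : ∀ w ∈ Y, Dec s t w) : ∀ n, ∀ w ∈ powS Y n, Dec s t w := by
  intro n
  induction n with
  | zero => exact hY
  | succ n ih =>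
    rintro w ⟨y, hy, z, hz, rfl⟩
    exact (hY y hy).append (ih z hz) hst.symm

theorem exists_std_of_altS {Z : Set (List (X ⊕ Bool))} (hZ : Z ⊆ frakXinf X) :
    ∀ w ∈ altS (lettersS X) Z, ∃ L, IsStd L ∧ w = L.flatten := by
  have key : ∀ (s t : Bool) (w : List (X ⊕ Bool)), Dec s t w → ∃ L, IsStd L ∧ w = L.flatten := by
    rintro s t w ⟨L, rfl, hL, -, -⟩
    exact ⟨L, hL, rfl⟩
  intro w hw
  simp only [altS, Set.mem_union] at hw
  rcases hw with (((h | h | h) | h) | h | h)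
  · obtain ⟨n, h⟩ := Set.mem_iUnion.mp h
    exact key _ _ _ (dec_pow (by simp) (dec_cat_lb hZ) n w h)
  · exact key _ _ _ (dec_letter h)
  · obtain ⟨n, h⟩ := Set.mem_iUnion.mp h
    obtain ⟨y, hy, z, hz, rfl⟩ := h
    exact key _ _ _ ((dec_pow (by simp) (dec_cat_lb hZ) n y hy).append (dec_letter hz) (by simp))
  · obtain ⟨n, h⟩ := Set.mem_iUnion.mp h
    exact key _ _ _ (dec_pow (by simp) (dec_cat_bl hZ) n w h)
  · exact key _ _ _ (dec_br hZ h)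
  · obtain ⟨n, h⟩ := Set.mem_iUnion.mp h
    obtain ⟨y, hy, z, hz, rfl⟩ := h
    exact key _ _ _ ((dec_pow (by simp) (dec_cat_bl hZ) n y hy).append (dec_br hZ hz) (by simp))

end RB

/-- Every Rota-Baxter word `𝔵 ∈ 𝔛_∞` has a unique standard decomposition
`𝔵 = 𝔵₁𝔵₂⋯𝔵_b` with the factors lying alternately in `X` and `⌊𝔛_∞⌋`. -/
theorem stmt_10 (X : Type*) :
    ∀ w ∈ frakXinf X, ∃! L : List (List (X ⊕ Bool)), IsStd L ∧ w = L.flatten := by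
  intro w hw
  have hex : ∃ L, IsStd L ∧ w = L.flatten := by
    obtain ⟨n, hw⟩ := Set.mem_iUnion.mp hw
    cases n with
    | zero =>
      obtain ⟨x, rfl⟩ := hw
      exact ⟨[letter x], RB.std_single (Or.inl ⟨x, rfl⟩), by simp⟩
    | succ n =>
      exact RB.exists_std_of_altS (Set.subset_iUnion (frakX X) n) w hw
  obtain ⟨L, hL, hwL⟩ := hex
  refine ⟨L, ⟨hL, hwL⟩, ?_⟩
  rintro L' ⟨hL', hwL'⟩
  exact RB.good_unique L' L ⟨hL'.2.1, hL'.2.2⟩ ⟨hL.2.1, hL.2.2⟩ (hwL' ▸ hwL ▸ rfl)
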